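/- arXiv:2205.04241 — 6 statements merged into one kernel-verified Lean document; each statement's English description precedes it below -/
import Mathlib

section
/- Let α be a positive real number that is not an integer, set m = ⌊α⌋, and let u be a nonzero real number. Then the set of nonzero complex numbers z with z^α = u (principal power) is finite, and its cardinality equals m + 1 if either (u > 0 and m is even) or (u < 0 and m is odd), and equals m otherwise. -/
open Complex

/-- For a positive non-integer real exponent `α` with `m = ⌊α⌋` and a nonzero real `u`,
the set of nonzero complex solutions of the principal-power equation `z ^ α = u` is
finite, of cardinality `m + 1` when (`u > 0` and `m` even) or (`u < 0` and `m` odd),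
and of cardinality `m` otherwise. -/
theorem card_roots_real_exponent (α : ℝ) (hα : 0 < α) (hni : ∀ n : ℤ, α ≠ n) (u : ℝ)
    (hu : u ≠ 0) :
    {z : ℂ | z ≠ 0 ∧ z ^ (α : ℂ) = (u : ℂ)}.Finite ∧
    {z : ℂ | z ≠ 0 ∧ z ^ (α : ℂ) = (u : ℂ)}.ncard =
      if (0 < u ∧ Even ⌊α⌋) ∨ (u < 0 ∧ Odd ⌊α⌋) then ⌊α⌋.toNat + 1 else ⌊α⌋.toNat := by
  have hπ : (0:ℝ) < Real.pi := Real.pi_pos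
  have hαc : (α : ℂ) ≠ 0 := by exact_mod_cast hα.ne'
  have huc : (u : ℂ) ≠ 0 := by exact_mod_cast hu
  set a : ℝ := (u : ℂ).arg with ha
  set w : ℤ → ℂ := fun k => (Complex.log u + (k : ℂ) * (2 * Real.pi * I)) / (α : ℂ) with hw
  have him : ∀ k : ℤ, (w k).im = (a + 2 * Real.pi * k) / α := by
    intro k
    rw [hw]
    simp only [Complex.div_ofReal_im, Complex.add_im, Complex.log_im, Complex.mul_im,
      Complex.mul_re, Complex.intCast_re, Complex.intCast_im, Complex.I_re, Complex.I_im,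
      Complex.ofReal_re, Complex.ofReal_im, Complex.re_ofNat, Complex.im_ofNat]
    rw [← ha]
    ring_nf
  set lo : ℤ := ⌊(-(Real.pi * α) - a) / (2 * Real.pi)⌋ with hlo
  set hi : ℤ := ⌊(Real.pi * α - a) / (2 * Real.pi)⌋ with hhi
  have hK : ∀ k : ℤ, k ∈ Finset.Ioc lo hi ↔ -Real.pi < (w k).im ∧ (w k).im ≤ Real.pi := by
    intro k
    rw [Finset.mem_Ioc, him, hlo, hhi, Int.floor_lt, Int.le_floor]
    have e1 : (-(Real.pi*α) - a)/(2*Real.pi) < (k:ℝ) ↔ -(Real.pi*α) - a < k*(2*Real.pi) :=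
      div_lt_iff₀ (by positivity)
    have e2 : (k:ℝ) ≤ (Real.pi*α - a)/(2*Real.pi) ↔ (k:ℝ)*(2*Real.pi) ≤ Real.pi*α - a :=
      le_div_iff₀ (by positivity)
    have e3 : -Real.pi < (a+2*Real.pi*k)/α ↔ (-Real.pi)*α < a+2*Real.pi*k := lt_div_iff₀ hα
    have e4 : (a+2*Real.pi*k)/α ≤ Real.pi ↔ a+2*Real.pi*k ≤ Real.pi*α := div_le_iff₀ hα
    rw [e1, e2, e3, e4]
    constructor
    · rintro ⟨h1, h2⟩; exact ⟨by linarith, by linarith⟩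
    · rintro ⟨h1, h2⟩; exact ⟨by linarith, by linarith⟩
  have key : {z : ℂ | z ≠ 0 ∧ z ^ (α : ℂ) = (u : ℂ)} =
      (fun k => Complex.exp (w k)) '' (Finset.Ioc lo hi : Set ℤ) := by
    ext z
    simp only [Set.mem_setOf_eq, Set.mem_image, Finset.mem_coe]
    constructor
    · rintro ⟨hz, hzα⟩
      rw [Complex.cpow_def_of_ne_zero hz] at hzα
      rw [show (u:ℂ) = Complex.exp (Complex.log u) from (Complex.exp_log huc).symm,
        Complex.exp_eq_exp_iff_exists_int] at hzα
      obtain ⟨n, hn⟩ := hzα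
      have hlog : Complex.log z = w n := by
        rw [hw]
        field_simp
        linear_combination hn
      refine ⟨n, ?_, ?_⟩
      · rw [hK, ← hlog]
        exact ⟨Complex.neg_pi_lt_log_im z, Complex.log_im_le_pi z⟩
      · rw [← hlog, Complex.exp_log hz]
    · rintro ⟨k, hk, hzk⟩
      rw [hK] at hk
      refine ⟨by rw [← hzk]; exact Complex.exp_ne_zero _, ?_⟩
      rw [← hzk, show (u:ℂ) = Complex.exp (Complex.log u) from (Complex.exp_log huc).symm]
      rw [Complex.cpow_def_of_ne_zero (Complex.exp_ne_zero _), Complex.log_exp hk.1 hk.2]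
      rw [Complex.exp_eq_exp_iff_exists_int]
      exact ⟨k, by rw [hw]; field_simp⟩
  have hinj : Set.InjOn (fun k => Complex.exp (w k)) (Finset.Ioc lo hi : Set ℤ) := by
    intro k hk j hj hkj
    simp only [Finset.mem_coe, hK] at hk hj
    simp only at hkj
    rw [Complex.exp_eq_exp_iff_exists_int] at hkj
    obtain ⟨n, hn⟩ := hkj
    have himeq : (w k).im = (w j).im + 2 * Real.pi * n := by
      rw [hn]
      simp [Complex.add_im, Complex.mul_im]
      ring
    have hn0 : n = 0 := by
      have b1 : -(2*Real.pi) < 2 * Real.pi * n := by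
        have := hk.1; have := hj.2; linarith [himeq]
      have b2 : 2 * Real.pi * n < 2 * Real.pi := by
        have := hk.2; have := hj.1; linarith [himeq]
      have hn1 : (n:ℝ) < 1 := by nlinarith
      have hn2 : (-1:ℝ) < (n:ℝ) := by nlinarith
      have hn1' : n < 1 := by exact_mod_cast hn1
      have hn2' : (-1:ℤ) < n := by exact_mod_cast hn2
      omega
    rw [hn0] at hn
    simp only [Int.cast_zero, zero_mul, add_zero] at hn
    have heq2 := him k
    rw [hn, him j] at heq2
    have hkj' : (k:ℝ) = j := by
      field_simp at heq2
      exact mul_left_cancel₀ (by positivity : (2*Real.pi) ≠ 0) (by linarith)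
    exact_mod_cast hkj'
  constructor
  · rw [key]; exact ((Finset.Ioc lo hi).finite_toSet).image _
  · rw [key, Set.ncard_image_of_injOn hinj, Set.ncard_coe_finset, Int.card_Ioc]
    have hm0 : 0 ≤ ⌊α⌋ := Int.floor_nonneg.mpr hα.le
    have hmlt : (⌊α⌋:ℝ) < α := lt_of_le_of_ne (Int.floor_le α) fun h => hni ⌊α⌋ h.symm
    have hml : α < ⌊α⌋ + 1 := Int.lt_floor_add_one α
    rcases hu.lt_or_gt with hneg | hpos
    · -- u < 0
      have ha' : a = Real.pi := Complex.arg_ofReal_of_neg hneg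
      have hhi' : hi = ⌊(α-1)/2⌋ := by
        rw [hhi, ha']; congr 1; field_simp
      have hlo' : lo = ⌊(-α-1)/2⌋ := by
        rw [hlo, ha']; congr 1; field_simp
      rcases Int.even_or_odd ⌊α⌋ with ⟨p, hp⟩ | ⟨p, hp⟩
      · -- m even : answer m, condition false
        have hpr : (⌊α⌋:ℝ) = p + p := by exact_mod_cast congrArg (Int.cast : ℤ → ℝ) hp
        have h1 : hi = p - 1 := by
          rw [hhi', Int.floor_eq_iff]
          constructor <;> push_cast <;> linarith
        have h2 : lo = -p - 1 := by
          rw [hlo', Int.floor_eq_iff]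
          constructor <;> push_cast <;> linarith
        rw [if_neg]
        · omega
        · rintro (⟨h, _⟩ | ⟨_, h⟩)
          · exact absurd h (not_lt.mpr hneg.le)
          · exact (Int.not_odd_iff_even.mpr ⟨p, hp⟩) h
      · -- m odd : answer m+1, condition true
        have hpr : (⌊α⌋:ℝ) = 2*p + 1 := by exact_mod_cast congrArg (Int.cast : ℤ → ℝ) hp
        have h1 : hi = p := by
          rw [hhi', Int.floor_eq_iff]
          constructor <;> push_cast <;> linarith
        have h2 : lo = -p - 2 := by
          rw [hlo', Int.floor_eq_iff]
          constructor <;> push_cast <;> linarith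
        rw [if_pos (Or.inr ⟨hneg, ⟨p, hp⟩⟩)]
        omega
    · -- u > 0
      have ha' : a = 0 := Complex.arg_ofReal_of_nonneg hpos.le
      have hhi' : hi = ⌊α/2⌋ := by
        rw [hhi, ha']; congr 1; field_simp; ring
      have hlo' : lo = ⌊-α/2⌋ := by
        rw [hlo, ha']; congr 1; field_simp; ring
      rcases Int.even_or_odd ⌊α⌋ with ⟨p, hp⟩ | ⟨p, hp⟩
      · -- m even : answer m+1, condition true
        have hpr : (⌊α⌋:ℝ) = p + p := by exact_mod_cast congrArg (Int.cast : ℤ → ℝ) hp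
        have h1 : hi = p := by
          rw [hhi', Int.floor_eq_iff]
          constructor <;> push_cast <;> linarith
        have h2 : lo = -p - 1 := by
          rw [hlo', Int.floor_eq_iff]
          constructor <;> push_cast <;> linarith
        rw [if_pos (Or.inl ⟨hpos, ⟨p, hp⟩⟩)]
        omega
      · -- m odd : answer m, condition false
        have hpr : (⌊α⌋:ℝ) = 2*p + 1 := by exact_mod_cast congrArg (Int.cast : ℤ → ℝ) hp
        have h1 : hi = p := by
          rw [hhi', Int.floor_eq_iff]
          constructor <;> push_cast <;> linarith
        have h2 : lo = -p - 1 := by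
          rw [hlo', Int.floor_eq_iff]
          constructor <;> push_cast <;> linarith
        rw [if_neg]
        · omega
        · rintro (⟨_, h⟩ | ⟨h, _⟩)
          · exact (Int.not_even_iff_odd.mpr ⟨p, hp⟩) h
          · exact absurd h (not_lt.mpr hpos.le)
end

section
/- The set of nonzero complex numbers z satisfying z^π = 2 (principal power) is exactly { 2^{1/π} · exp(2ik) : k ∈ {−1, 0, 1} }, and it has exactly 3 elements. -/
open Complex Real

private lemma w_def (k : ℤ) :
    (((2 : ℝ) ^ (1 / Real.pi) : ℝ) : ℂ) * Complex.exp (2 * Complex.I * k)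
      = Complex.exp (((Real.log 2 / Real.pi : ℝ) : ℂ) + 2 * Complex.I * k) := by
  rw [Complex.exp_add]
  congr 1
  rw [Real.rpow_def_of_pos (by norm_num : (0:ℝ) < 2), mul_one_div, ← Complex.ofReal_exp]

private lemma w_im (r : ℝ) (k : ℤ) :
    ((r : ℂ) + 2 * Complex.I * k).im = 2 * (k : ℝ) := by
  simp

private lemma pi_gt_two : (2:ℝ) < Real.pi := by
  linarith [Real.pi_gt_three]

private lemma im_bounds {k : ℤ} (hk : k ∈ ({-1, 0, 1} : Set ℤ)) :
    -Real.pi < 2 * (k : ℝ) ∧ 2 * (k : ℝ) ≤ Real.pi := by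
  have h2 := pi_gt_two
  rcases hk with rfl | rfl | rfl <;> constructor <;> push_cast <;> linarith

private lemma log_w {k : ℤ} (hk : k ∈ ({-1, 0, 1} : Set ℤ)) :
    Complex.log (Complex.exp (((Real.log 2 / Real.pi : ℝ) : ℂ) + 2 * Complex.I * k))
      = ((Real.log 2 / Real.pi : ℝ) : ℂ) + 2 * Complex.I * k := by
  obtain ⟨h1, h2⟩ := im_bounds hk
  exact Complex.log_exp (by rw [w_im]; exact h1) (by rw [w_im]; exact h2)

/-- The nonzero complex solutions of the principal-power equation `z ^ π = 2` are
exactly `2^(1/π) · exp(2ik)` for `k ∈ {-1, 0, 1}`, three values in all. -/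
theorem roots_z_pow_pi_eq_two :
    {z : ℂ | z ≠ 0 ∧ z ^ (Real.pi : ℂ) = 2} =
      (fun k : ℤ => (((2 : ℝ) ^ (1 / Real.pi) : ℝ) : ℂ) *
        Complex.exp (2 * Complex.I * k)) '' {-1, 0, 1} ∧
    {z : ℂ | z ≠ 0 ∧ z ^ (Real.pi : ℂ) = 2}.ncard = 3 := by
  have hπ : (0:ℝ) < Real.pi := Real.pi_pos
  have hπC : (Real.pi : ℂ) ≠ 0 := by exact_mod_cast hπ.ne'
  have h2 : (2 : ℂ) = Complex.exp ((Real.log 2 : ℝ) : ℂ) := by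
    rw [← Complex.ofReal_exp, Real.exp_log (by norm_num : (0:ℝ) < 2)]
    norm_num
  have hset : {z : ℂ | z ≠ 0 ∧ z ^ (Real.pi : ℂ) = 2} =
      (fun k : ℤ => (((2 : ℝ) ^ (1 / Real.pi) : ℝ) : ℂ) *
        Complex.exp (2 * Complex.I * k)) '' {-1, 0, 1} := by
    ext z
    simp only [Set.mem_setOf_eq, Set.mem_image]
    constructor
    · rintro ⟨hz, hpow⟩
      rw [Complex.cpow_def_of_ne_zero hz, h2, Complex.exp_eq_exp_iff_exists_int] at hpow
      obtain ⟨n, hn⟩ := hpow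
      have hlog : Complex.log z = ((Real.log 2 / Real.pi : ℝ) : ℂ) + 2 * Complex.I * n := by
        apply mul_right_cancel₀ hπC
        rw [hn, add_mul, Complex.ofReal_div, div_mul_cancel₀ _ hπC]
        ring
      have him : (Complex.log z).im = 2 * (n : ℝ) := by rw [hlog, w_im]
      have hn1 : -Real.pi < 2 * (n : ℝ) := by
        rw [← him, Complex.log_im]; exact Complex.neg_pi_lt_arg z
      have hn2 : 2 * (n : ℝ) ≤ Real.pi := by
        rw [← him, Complex.log_im]; exact Complex.arg_le_pi z
      have hmem : n ∈ ({-1, 0, 1} : Set ℤ) := by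
        have hlt : Real.pi < 4 := by linarith [Real.pi_lt_d2]
        have hb : -2 < (n:ℝ) ∧ (n:ℝ) < 2 := ⟨by linarith, by linarith⟩
        have hb1 : -2 < n := by exact_mod_cast hb.1
        have hb2 : n < 2 := by exact_mod_cast hb.2
        interval_cases n <;> simp
      refine ⟨n, hmem, ?_⟩
      rw [w_def, ← hlog, Complex.exp_log hz]
    · rintro ⟨k, hk, rfl⟩
      rw [w_def]
      refine ⟨Complex.exp_ne_zero _, ?_⟩
      rw [Complex.cpow_def_of_ne_zero (Complex.exp_ne_zero _), log_w hk]
      have harg : (((Real.log 2 / Real.pi : ℝ) : ℂ) + 2 * Complex.I * k) * (Real.pi : ℂ)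
          = ((Real.log 2 : ℝ) : ℂ) + (k : ℂ) * (2 * (Real.pi : ℂ) * Complex.I) := by
        rw [add_mul, Complex.ofReal_div, div_mul_cancel₀ _ hπC]
        ring
      rw [harg, Complex.exp_add, Complex.exp_int_mul_two_pi_mul_I, mul_one, ← h2]
  refine ⟨hset, ?_⟩
  rw [hset]
  rw [Set.ncard_image_of_injOn, Set.ncard_insert_of_notMem (by norm_num),
    Set.ncard_insert_of_notMem (by norm_num), Set.ncard_singleton]
  · intro a ha b hb hab
    simp only at hab
    rw [w_def, w_def] at hab
    have hl := congrArg Complex.log hab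
    rw [log_w ha, log_w hb] at hl
    have him := congrArg Complex.im hl
    rw [w_im, w_im] at him
    exact_mod_cast mul_left_cancel₀ (two_ne_zero) him
end

section
/- The set of nonzero complex numbers z satisfying z^π = −2 (principal power) is exactly { 2^{1/π} · exp(i(2k+1)) : k ∈ {−2, −1, 0, 1} }, and it has exactly 4 elements. -/
open Complex Real

noncomputable def fkAux (k : ℤ) : ℂ :=
  (((2 : ℝ) ^ (1 / Real.pi) : ℝ) : ℂ) * Complex.exp (Complex.I * (2 * k + 1))

lemma imAux (k : ℤ) : (((Real.log 2 / Real.pi : ℝ) : ℂ) + (2 * k + 1) * Complex.I).im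
    = 2 * (k : ℝ) + 1 := by
  simp only [Complex.add_im, Complex.ofReal_im, Complex.mul_im, Complex.I_im, Complex.I_re,
    Complex.add_re, Complex.mul_re, Complex.one_re, Complex.one_im, Complex.intCast_im,
    Complex.intCast_re, Complex.re_ofNat, Complex.im_ofNat]
  ring

lemma fkAux_eq_exp (k : ℤ) :
    fkAux k = Complex.exp (((Real.log 2 / Real.pi : ℝ) : ℂ) + (2 * k + 1) * Complex.I) := by
  rw [fkAux, Complex.exp_add]
  congr 1
  · rw [← Complex.ofReal_exp]
    norm_cast
    rw [Real.rpow_def_of_pos two_pos]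
    congr 1
    ring
  · congr 1
    ring

lemma log_fkAux (k : ℤ) (h1 : -Real.pi < 2 * (k : ℝ) + 1) (h2 : 2 * (k : ℝ) + 1 ≤ Real.pi) :
    Complex.log (fkAux k) = ((Real.log 2 / Real.pi : ℝ) : ℂ) + (2 * k + 1) * Complex.I := by
  rw [fkAux_eq_exp, Complex.log_exp (by rw [imAux]; exact h1) (by rw [imAux]; exact h2)]

lemma fkAux_ne_zero (k : ℤ) : fkAux k ≠ 0 := by
  rw [fkAux_eq_exp]; exact Complex.exp_ne_zero _

lemma fkAux_pow (k : ℤ) (h1 : -Real.pi < 2 * (k : ℝ) + 1) (h2 : 2 * (k : ℝ) + 1 ≤ Real.pi) :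
    fkAux k ^ (Real.pi : ℂ) = -2 := by
  rw [Complex.cpow_def_of_ne_zero (fkAux_ne_zero k), log_fkAux k h1 h2]
  have hπr : Real.pi ≠ 0 := Real.pi_ne_zero
  have hπ : (Real.pi : ℂ) ≠ 0 := Complex.ofReal_ne_zero.mpr Real.pi_ne_zero
  have harg : (((Real.log 2 / Real.pi : ℝ) : ℂ) + (2 * k + 1) * Complex.I) * (Real.pi : ℂ)
      = ((Real.log 2 : ℝ) : ℂ) + ((k : ℂ) * (2 * (Real.pi : ℂ) * Complex.I)
          + (Real.pi : ℂ) * Complex.I) := by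
    push_cast
    field_simp
  rw [harg, Complex.exp_add, Complex.exp_add, Complex.exp_int_mul_two_pi_mul_I,
    Complex.exp_pi_mul_I]
  have h2' : Complex.exp ((Real.log 2 : ℝ) : ℂ) = 2 := by
    rw [← Complex.ofReal_exp, Real.exp_log two_pos]; norm_num
  rw [h2']; ring

lemma mem_range_of_sol {z : ℂ} (hz0 : z ≠ 0) (hz : z ^ (Real.pi : ℂ) = -2) :
    ∃ k : ℤ, k ∈ ({-2, -1, 0, 1} : Set ℤ) ∧ fkAux k = z := by
  rw [Complex.cpow_def_of_ne_zero hz0] at hz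
  have hπ : (Real.pi : ℂ) ≠ 0 := Complex.ofReal_ne_zero.mpr Real.pi_ne_zero
  have hπr : Real.pi ≠ 0 := Real.pi_ne_zero
  have hc : Complex.exp (((Real.log 2 : ℝ) : ℂ) + (Real.pi : ℂ) * Complex.I) = -2 := by
    rw [Complex.exp_add, Complex.exp_pi_mul_I, ← Complex.ofReal_exp, Real.exp_log two_pos]
    norm_num
  rw [← hc] at hz
  obtain ⟨n, hn⟩ := Complex.exp_eq_exp_iff_exists_int.mp hz
  have hlog : Complex.log z = ((Real.log 2 / Real.pi : ℝ) : ℂ) + (2 * n + 1) * Complex.I := by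
    apply mul_right_cancel₀ hπ
    rw [hn]
    push_cast
    field_simp
    ring
  have him : (Complex.log z).im = 2 * (n : ℝ) + 1 := by rw [hlog, imAux]
  have harg1 : -Real.pi < (Complex.log z).im := by
    rw [Complex.log_im]; exact Complex.neg_pi_lt_arg z
  have harg2 : (Complex.log z).im ≤ Real.pi := by
    rw [Complex.log_im]; exact Complex.arg_le_pi z
  rw [him] at harg1 harg2
  have hpi1 : Real.pi < 3.15 := Real.pi_lt_d2
  have hpi2 : 3 < Real.pi := Real.pi_gt_three
  have hnlb : (-2 : ℤ) ≤ n := by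
    by_contra h
    push_neg at h
    have : (n : ℝ) ≤ -3 := by exact_mod_cast (by omega : n ≤ -3)
    linarith
  have hnub : n ≤ 1 := by
    by_contra h
    push_neg at h
    have : (2 : ℝ) ≤ (n : ℝ) := by exact_mod_cast (by omega : (2 : ℤ) ≤ n)
    linarith
  refine ⟨n, by simp only [Set.mem_insert_iff, Set.mem_singleton_iff]; omega, ?_⟩
  rw [fkAux_eq_exp, ← hlog, Complex.exp_log hz0]

lemma bounds_of_mem {k : ℤ} (hk : k ∈ ({-2, -1, 0, 1} : Set ℤ)) :
    -Real.pi < 2 * (k : ℝ) + 1 ∧ 2 * (k : ℝ) + 1 ≤ Real.pi := by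
  have hpi2 : 3 < Real.pi := Real.pi_gt_three
  rcases hk with h | h | h | h <;> subst h <;> push_cast <;> constructor <;> linarith

/-- The nonzero complex solutions of the principal-power equation `z ^ π = -2` are
exactly `2^(1/π) · exp(i(2k+1))` for `k ∈ {-2, -1, 0, 1}`, four values in all. -/
theorem roots_z_pow_pi_eq_neg_two :
    {z : ℂ | z ≠ 0 ∧ z ^ (Real.pi : ℂ) = -2} =
      (fun k : ℤ => (((2 : ℝ) ^ (1 / Real.pi) : ℝ) : ℂ) *
        Complex.exp (Complex.I * (2 * k + 1))) '' {-2, -1, 0, 1} ∧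
    {z : ℂ | z ≠ 0 ∧ z ^ (Real.pi : ℂ) = -2}.ncard = 4 := by
  have hset : {z : ℂ | z ≠ 0 ∧ z ^ (Real.pi : ℂ) = -2} =
      (fun k : ℤ => (((2 : ℝ) ^ (1 / Real.pi) : ℝ) : ℂ) *
        Complex.exp (Complex.I * (2 * k + 1))) '' {-2, -1, 0, 1} := by
    ext z
    simp only [Set.mem_setOf_eq, Set.mem_image]
    constructor
    · rintro ⟨hz0, hz⟩
      obtain ⟨k, hk, hfk⟩ := mem_range_of_sol hz0 hz
      exact ⟨k, hk, hfk⟩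
    · rintro ⟨k, hk, rfl⟩
      obtain ⟨h1, h2⟩ := bounds_of_mem hk
      exact ⟨fkAux_ne_zero k, fkAux_pow k h1 h2⟩
  refine ⟨hset, ?_⟩
  rw [hset]
  have hinj : Set.InjOn (fun k : ℤ => (((2 : ℝ) ^ (1 / Real.pi) : ℝ) : ℂ) *
      Complex.exp (Complex.I * (2 * k + 1))) ({-2, -1, 0, 1} : Set ℤ) := by
    intro a ha b hb hab
    obtain ⟨ha1, ha2⟩ := bounds_of_mem ha
    obtain ⟨hb1, hb2⟩ := bounds_of_mem hb
    have hab' : fkAux a = fkAux b := hab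
    have hlogs : Complex.log (fkAux a) = Complex.log (fkAux b) := by rw [hab']
    rw [log_fkAux a ha1 ha2, log_fkAux b hb1 hb2] at hlogs
    have him := congrArg Complex.im hlogs
    rw [imAux, imAux] at him
    have : (a : ℝ) = (b : ℝ) := by linarith
    exact_mod_cast this
  rw [Set.ncard_image_of_injOn hinj]
  rw [show ({-2, -1, 0, 1} : Set ℤ) = (({-2, -1, 0, 1} : Finset ℤ) : Set ℤ) by simp,
    Set.ncard_coe_finset]
  decide
end

section
/- The set of nonzero complex numbers z satisfying z^{π+1} = 2 (principal power) is exactly { 2^{1/(π+1)} · exp(2πik/(π+1)) : k ∈ {−2, −1, 0, 1, 2} }, and it has exactly 5 elements. -/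
open Complex Real

noncomputable def rootF (k : ℤ) : ℂ :=
  (((2 : ℝ) ^ (1 / (Real.pi + 1)) : ℝ) : ℂ) *
    Complex.exp (2 * Real.pi * Complex.I * k / ((Real.pi : ℂ) + 1))

noncomputable def uu (k : ℤ) : ℂ :=
  ((Real.log 2 / (Real.pi + 1) : ℝ) : ℂ) +
    ((2 * Real.pi * k / (Real.pi + 1) : ℝ) : ℂ) * Complex.I

lemma hp_pos : (0:ℝ) < Real.pi + 1 := by positivity

lemma hpc_ne : ((Real.pi : ℂ) + 1) ≠ 0 := by
  have : ((Real.pi : ℂ) + 1) = (((Real.pi + 1 : ℝ)) : ℂ) := by push_cast; ring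
  rw [this]
  exact_mod_cast ne_of_gt hp_pos

lemma im_uu (k : ℤ) : (uu k).im = 2 * Real.pi * k / (Real.pi + 1) := by
  simp only [uu, Complex.add_im, Complex.ofReal_im, Complex.mul_im, Complex.ofReal_re,
    Complex.I_im, Complex.I_re, mul_zero, mul_one, zero_add, add_zero]

lemma exp_uu (k : ℤ) : Complex.exp (uu k) = rootF k := by
  have h1 : (((2 : ℝ) ^ (1 / (Real.pi + 1)) : ℝ) : ℂ) =
      Complex.exp ((Real.log 2 / (Real.pi + 1) : ℝ) : ℂ) := by
    rw [Real.rpow_def_of_pos (by norm_num)]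
    rw [← Complex.ofReal_exp]
    ring_nf
  have h2 : ((2 * Real.pi * k / (Real.pi + 1) : ℝ) : ℂ) * Complex.I =
      2 * Real.pi * Complex.I * k / ((Real.pi : ℂ) + 1) := by
    push_cast
    field_simp
  rw [uu, Complex.exp_add, ← h1, h2, rootF]

lemma uu_mul (k : ℤ) : uu k * ((Real.pi : ℂ) + 1) =
    ((Real.log 2 : ℝ) : ℂ) + (k : ℂ) * (2 * Real.pi * Complex.I) := by
  rw [uu]
  have h := hpc_ne
  have h' : (((Real.pi + 1 : ℝ)) : ℂ) ≠ 0 := by push_cast; exact h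
  push_cast
  field_simp

lemma mem_iff (z : ℂ) : (z ≠ 0 ∧ z ^ ((Real.pi : ℂ) + 1) = 2) ↔
    ∃ k ∈ ({-2, -1, 0, 1, 2} : Set ℤ), rootF k = z := by
  constructor
  · rintro ⟨hz, heq⟩
    rw [Complex.cpow_def_of_ne_zero hz] at heq
    have h2 : (2:ℂ) = Complex.exp (Complex.log 2) := (Complex.exp_log (by norm_num)).symm
    rw [h2] at heq
    obtain ⟨n, hn⟩ := Complex.exp_eq_exp_iff_exists_int.mp heq
    have hl2 : Complex.log 2 = ((Real.log 2 : ℝ) : ℂ) := by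
      rw [Complex.ofReal_log (by norm_num : (0:ℝ) ≤ 2)]; norm_num
    rw [hl2] at hn
    have hlog : Complex.log z = uu n := by
      apply mul_right_cancel₀ hpc_ne
      rw [hn, uu_mul]
    have him : (Complex.log z).im = 2 * Real.pi * n / (Real.pi + 1) := by
      rw [hlog, im_uu]
    have hub : 2 * Real.pi * (n:ℝ) / (Real.pi + 1) ≤ Real.pi := him ▸ Complex.log_im_le_pi z
    have hlb : -Real.pi < 2 * Real.pi * (n:ℝ) / (Real.pi + 1) := him ▸ Complex.neg_pi_lt_log_im z
    have hp := hp_pos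
    have hpi3 := Real.pi_gt_three
    have hpi4 := Real.pi_lt_d2
    have hub' : 2 * Real.pi * (n:ℝ) ≤ Real.pi * (Real.pi + 1) := by
      have := (div_le_iff₀ hp).mp hub
      linarith
    have hlb' : -(Real.pi * (Real.pi + 1)) < 2 * Real.pi * (n:ℝ) := by
      have := (lt_div_iff₀ hp).mp hlb
      nlinarith
    have hn3 : (n:ℝ) < 3 := by nlinarith
    have hn3' : (-3 : ℝ) < (n:ℝ) := by nlinarith
    have hn2 : n ≤ 2 := by exact_mod_cast Int.lt_add_one_iff.mp (by exact_mod_cast hn3)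
    have hn2' : -2 ≤ n := by
      have : (-3:ℤ) < n := by exact_mod_cast hn3'
      omega
    refine ⟨n, ?_, ?_⟩
    · simp only [Set.mem_insert_iff, Set.mem_singleton_iff]; omega
    · rw [← exp_uu, ← hlog, Complex.exp_log hz]
  · rintro ⟨k, hk, rfl⟩
    have hk' : -2 ≤ k ∧ k ≤ 2 := by
      simp only [Set.mem_insert_iff, Set.mem_singleton_iff] at hk
      rcases hk with h|h|h|h|h <;> omega
    have hkl : (-2:ℝ) ≤ (k:ℝ) := by exact_mod_cast hk'.1
    have hku : (k:ℝ) ≤ 2 := by exact_mod_cast hk'.2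
    have hp := hp_pos
    have hpi3 := Real.pi_gt_three
    have hzne : rootF k ≠ 0 := by rw [← exp_uu]; exact Complex.exp_ne_zero _
    refine ⟨hzne, ?_⟩
    have hlog : Complex.log (rootF k) = uu k := by
      rw [← exp_uu]
      apply Complex.log_exp
      · rw [im_uu]
        rw [lt_div_iff₀ hp]
        nlinarith
      · rw [im_uu]
        rw [div_le_iff₀ hp]
        nlinarith
    rw [Complex.cpow_def_of_ne_zero hzne, hlog, uu_mul, Complex.exp_add,
      Complex.exp_int_mul_two_pi_mul_I]
    have : Complex.exp ((Real.log 2 : ℝ) : ℂ) = 2 := by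
      rw [Complex.ofReal_log (by norm_num : (0:ℝ) ≤ 2)]
      exact Complex.exp_log (by norm_num)
    rw [this, mul_one]

lemma inj_on : Set.InjOn rootF ({-2, -1, 0, 1, 2} : Set ℤ) := by
  intro a ha b hb hab
  have hbound : ∀ k ∈ ({-2, -1, 0, 1, 2} : Set ℤ), -2 ≤ k ∧ k ≤ 2 := by
    intro k hk
    simp only [Set.mem_insert_iff, Set.mem_singleton_iff] at hk
    rcases hk with h|h|h|h|h <;> omega
  obtain ⟨ha1, ha2⟩ := hbound a ha
  obtain ⟨hb1, hb2⟩ := hbound b hb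
  rw [← exp_uu, ← exp_uu] at hab
  obtain ⟨m, hm⟩ := Complex.exp_eq_exp_iff_exists_int.mp hab
  have him := congrArg Complex.im hm
  simp [im_uu] at him
  -- him : 2π a/(π+1) = 2π b/(π+1) + m * 2π
  have hp := hp_pos
  have hpi3 := Real.pi_gt_three
  have hpip : 0 < Real.pi := by linarith
  have key : (a:ℝ) = (b:ℝ) + m * (Real.pi + 1) := by
    field_simp at him
    nlinarith [him]
  have hmz : m = 0 := by
    by_contra hm0
    have h1 : (1:ℝ) ≤ |(m:ℝ)| := by
      rw [← Int.cast_abs]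
      exact_mod_cast Int.one_le_abs hm0
    have hra1 : (-2:ℝ) ≤ (a:ℝ) := by exact_mod_cast ha1
    have hra2 : (a:ℝ) ≤ 2 := by exact_mod_cast ha2
    have hrb1 : (-2:ℝ) ≤ (b:ℝ) := by exact_mod_cast hb1
    have hrb2 : (b:ℝ) ≤ 2 := by exact_mod_cast hb2
    have hab4 : |(a:ℝ) - (b:ℝ)| ≤ 4 := by
      rw [abs_le]
      constructor <;> linarith
    have : |(a:ℝ) - b| = |(m:ℝ)| * (Real.pi + 1) := by
      rw [key]; rw [show (b:ℝ) + m*(Real.pi+1) - b = m * (Real.pi+1) by ring]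
      rw [abs_mul, abs_of_pos hp]
    nlinarith
  rw [hmz] at key
  have hfin : (a:ℝ) = (b:ℝ) := by push_cast at key; linarith
  exact_mod_cast hfin

/-- The nonzero complex solutions of the principal-power equation `z ^ (π+1) = 2` are
exactly `2^(1/(π+1)) · exp(2πik/(π+1))` for `k ∈ {-2, -1, 0, 1, 2}`, five values in all. -/
theorem roots_z_pow_pi_add_one_eq_two :
    {z : ℂ | z ≠ 0 ∧ z ^ ((Real.pi : ℂ) + 1) = 2} =
      (fun k : ℤ => (((2 : ℝ) ^ (1 / (Real.pi + 1)) : ℝ) : ℂ) *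
        Complex.exp (2 * Real.pi * Complex.I * k / ((Real.pi : ℂ) + 1))) ''
        {-2, -1, 0, 1, 2} ∧
    {z : ℂ | z ≠ 0 ∧ z ^ ((Real.pi : ℂ) + 1) = 2}.ncard = 5 := by
  have hset : {z : ℂ | z ≠ 0 ∧ z ^ ((Real.pi : ℂ) + 1) = 2} =
      rootF '' ({-2, -1, 0, 1, 2} : Set ℤ) := by
    ext z
    simp only [Set.mem_setOf_eq, Set.mem_image]
    rw [mem_iff]
  constructor
  · rw [hset]; rfl
  · rw [hset, Set.ncard_image_of_injOn inj_on]
    rw [show ({-2, -1, 0, 1, 2} : Set ℤ) = ↑({-2, -1, 0, 1, 2} : Finset ℤ) by simp]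
    rw [Set.ncard_coe_finset]
    decide
end

section
/- Let n be a natural number with n ≥ 2, let a₁, a₀ be real numbers with a₁ ≥ 0 and a₀ > 0, and let x* be the unique positive real number with (x*)^n = a₁·x* + a₀. Define g : ℝ → ℝ on positive reals by g(x) = (a₁·x + a₀)^{1/n} (the positive real n-th root). Then for every initial value x₀ > 0, the sequence of iterates j ↦ g^[j](x₀) converges to x*. -/
open Filter Topology

/-- For `n ≥ 2`, `a₁ ≥ 0`, `a₀ > 0`, let `x*` be the unique positive solution of
`x ^ n = a₁·x + a₀`, and let `g` agree with `x ↦ (a₁·x + a₀) ^ (1/n)` on positive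
reals. Then for every positive initial value the iterates of `g` converge to `x*`. -/
theorem iteration_converges_to_root (n : ℕ) (hn : 2 ≤ n) (a₁ a₀ : ℝ)
    (h₁ : 0 ≤ a₁) (h₀ : 0 < a₀) (xs : ℝ) (hxs : 0 < xs)
    (hroot : xs ^ n = a₁ * xs + a₀) (g : ℝ → ℝ)
    (hg : ∀ x : ℝ, 0 < x → g x = (a₁ * x + a₀) ^ ((1 : ℝ) / n)) :
    ∀ x₀ : ℝ, 0 < x₀ → Tendsto (fun j => g^[j] x₀) atTop (𝓝 xs) := by
  have hn0 : n ≠ 0 := by omega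
  have hnR : ((n : ℝ)) ≠ 0 := by exact_mod_cast hn0
  have hlin : ∀ x : ℝ, 0 < x → 0 < a₁ * x + a₀ := by
    intro x hx; nlinarith
  have hgpos : ∀ x : ℝ, 0 < x → 0 < g x := by
    intro x hx; rw [hg x hx]; exact Real.rpow_pos_of_pos (hlin x hx) _
  have hgpow : ∀ x : ℝ, 0 < x → (g x) ^ n = a₁ * x + a₀ := by
    intro x hx
    rw [hg x hx, ← Real.rpow_natCast ((a₁ * x + a₀) ^ ((1:ℝ)/n)) n,
      ← Real.rpow_mul (hlin x hx).le, one_div, inv_mul_cancel₀ hnR, Real.rpow_one]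
  -- strict monotone auxiliary function
  have hG : StrictMonoOn (fun x : ℝ => x ^ (n-1) - a₀ / x) (Set.Ioi 0) := by
    intro a ha b hb hab
    simp only [Set.mem_Ioi] at ha hb
    have h1 : a ^ (n-1) < b ^ (n-1) := pow_lt_pow_left₀ hab ha.le (by omega)
    have h2 : a₀ / b < a₀ / a := div_lt_div_of_pos_left h₀ ha hab
    simp only; linarith
  have hkey : ∀ x : ℝ, 0 < x → (x ^ (n-1) - a₀ / x = a₁ ↔ x ^ n = a₁ * x + a₀) := by
    intro x hx
    have hxn : x ^ n = x ^ (n-1) * x := by rw [← pow_succ]; congr 1; omega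
    have hax : a₀ / x * x = a₀ := div_mul_cancel₀ _ hx.ne'
    rw [hxn]
    constructor
    · intro h; nlinarith
    · intro h
      have : (x ^ (n-1) - a₀ / x) * x = a₁ * x := by rw [sub_mul, hax]; linarith
      exact mul_right_cancel₀ hx.ne' this
  have hGxs : xs ^ (n-1) - a₀ / xs = a₁ := (hkey xs hxs).2 hroot
  have huniq : ∀ y : ℝ, 0 < y → y ^ n = a₁ * y + a₀ → y = xs := by
    intro y hy hyr
    exact hG.injOn (Set.mem_Ioi.2 hy) (Set.mem_Ioi.2 hxs)
      (by rw [(hkey y hy).2 hyr, hGxs])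
  -- sign lemmas
  have hsign_lt : ∀ x : ℝ, 0 < x → x < xs → x ^ n < a₁ * x + a₀ := by
    intro x hx hlt
    have h := hG (Set.mem_Ioi.2 hx) (Set.mem_Ioi.2 hxs) hlt
    simp only [hGxs] at h
    have hxn : x ^ n = x ^ (n-1) * x := by rw [← pow_succ]; congr 1; omega
    have hax : a₀ / x * x = a₀ := div_mul_cancel₀ _ hx.ne'
    nlinarith
  have hsign_gt : ∀ x : ℝ, 0 < x → xs < x → a₁ * x + a₀ < x ^ n := by
    intro x hx hlt
    have h := hG (Set.mem_Ioi.2 hxs) (Set.mem_Ioi.2 hx) hlt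
    simp only [hGxs] at h
    have hxn : x ^ n = x ^ (n-1) * x := by rw [← pow_succ]; congr 1; omega
    have hax : a₀ / x * x = a₀ := div_mul_cancel₀ _ hx.ne'
    nlinarith
  have hgxs : g xs = xs := by
    have h1 : g xs ^ n = xs ^ n := by rw [hgpow xs hxs, hroot]
    have h2 := hgpos xs hxs
    exact le_antisymm (le_of_pow_le_pow_left₀ hn0 hxs.le h1.le)
      (le_of_pow_le_pow_left₀ hn0 h2.le h1.ge)
  -- g expands below xs, contracts above
  have hstep_le : ∀ x : ℝ, 0 < x → x ≤ xs → x ≤ g x ∧ g x ≤ xs := by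
    intro x hx hle
    rcases eq_or_lt_of_le hle with h | h
    · subst h; rw [hgxs]; exact ⟨le_rfl, le_rfl⟩
    constructor
    · have : x ^ n < g x ^ n := by rw [hgpow x hx]; exact hsign_lt x hx h
      exact (lt_of_pow_lt_pow_left₀ n (hgpos x hx).le this).le
    · have : g x ^ n ≤ xs ^ n := by rw [hgpow x hx, hroot]; nlinarith
      exact le_of_pow_le_pow_left₀ hn0 hxs.le this
  have hstep_ge : ∀ x : ℝ, 0 < x → xs ≤ x → g x ≤ x ∧ xs ≤ g x := by
    intro x hx hle
    rcases eq_or_lt_of_le hle with h | h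
    · rw [← h, hgxs]; exact ⟨le_rfl, le_rfl⟩
    constructor
    · have : g x ^ n < x ^ n := by rw [hgpow x hx]; exact hsign_gt x hx h
      exact (lt_of_pow_lt_pow_left₀ n hx.le this).le
    · have : xs ^ n ≤ g x ^ n := by rw [hgpow x hx, hroot]; nlinarith
      exact le_of_pow_le_pow_left₀ hn0 (hgpos x hx).le this
  -- limit of a positive sequence with u(j+1)=g(u j) is xs
  have hlimit : ∀ (u : ℕ → ℝ) (L : ℝ), (∀ j, 0 < u j) → (∀ j, u (j+1) = g (u j)) →
      0 < L → Tendsto u atTop (𝓝 L) → L = xs := by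
    intro u L hupos hustep hL hT
    set φ : ℝ → ℝ := fun x => (a₁ * x + a₀) ^ ((1:ℝ)/n) with hφ
    have hcont : ContinuousAt φ L := by
      apply ContinuousAt.rpow_const
      · fun_prop
      · right; positivity
    have h1 : Tendsto (fun j => u (j+1)) atTop (𝓝 L) :=
      hT.comp (tendsto_add_atTop_nat 1)
    have h2 : Tendsto (fun j => u (j+1)) atTop (𝓝 (φ L)) := by
      have : (fun j => u (j+1)) = fun j => φ (u j) := by
        funext j; rw [hustep j, hg _ (hupos j)]
      rw [this]
      exact hcont.tendsto.comp hT
    have hφL : φ L = L := tendsto_nhds_unique h2 h1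
    have hfix : g L = L := by rw [hg L hL]; exact hφL
    have h3 := hgpow L hL
    rw [hfix] at h3
    exact huniq L hL h3
  intro x₀ hx₀
  set u : ℕ → ℝ := fun j => g^[j] x₀ with hu
  have hustep : ∀ j, u (j+1) = g (u j) := by
    intro j; simp only [hu, Function.iterate_succ_apply']
  rcases lt_trichotomy x₀ xs with h | h | h
  · -- increasing case
    have hinv : ∀ j, 0 < u j ∧ u j ≤ xs := by
      intro j; induction j with
      | zero => exact ⟨hx₀, h.le⟩
      | succ k ih =>
        rw [hustep k]
        exact ⟨hgpos _ ih.1, (hstep_le _ ih.1 ih.2).2⟩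
    have hmono : Monotone u := by
      apply monotone_nat_of_le_succ
      intro j; rw [hustep j]; exact (hstep_le _ (hinv j).1 (hinv j).2).1
    have hbdd : BddAbove (Set.range u) := ⟨xs, by rintro _ ⟨j, rfl⟩; exact (hinv j).2⟩
    have hT : Tendsto u atTop (𝓝 (⨆ j, u j)) := tendsto_atTop_ciSup hmono hbdd
    have hLpos : 0 < ⨆ j, u j := lt_of_lt_of_le (hinv 0).1 (le_ciSup hbdd 0)
    have := hlimit u _ (fun j => (hinv j).1) hustep hLpos hT
    rwa [this] at hT
  · -- fixed point case
    have : ∀ j, u j = xs := by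
      intro j; induction j with
      | zero => exact h
      | succ k ih => rw [hustep k, ih, hgxs]
    have heq : (fun j => g^[j] x₀) = fun _ => xs := funext this
    rw [hu, heq]
    exact tendsto_const_nhds
  · -- decreasing case
    have hinv : ∀ j, xs ≤ u j := by
      intro j; induction j with
      | zero => exact h.le
      | succ k ih =>
        rw [hustep k]
        exact (hstep_ge _ (lt_of_lt_of_le hxs ih) ih).2
    have hupos : ∀ j, 0 < u j := fun j => lt_of_lt_of_le hxs (hinv j)
    have hmono : Antitone u := by
      apply antitone_nat_of_succ_le
      intro j; rw [hustep j]; exact (hstep_ge _ (hupos j) (hinv j)).1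
    have hbdd : BddBelow (Set.range u) := ⟨xs, by rintro _ ⟨j, rfl⟩; exact hinv j⟩
    have hT : Tendsto u atTop (𝓝 (⨅ j, u j)) := tendsto_atTop_ciInf hmono hbdd
    have hLpos : 0 < ⨅ j, u j := lt_of_lt_of_le hxs (le_ciInf hinv)
    have := hlimit u _ hupos hustep hLpos hT
    rwa [this] at hT
end

section
/- There exists a real number x with −34 < x < −33.9 such that ζ(x) = x, where ζ is the Riemann zeta function (evaluated at the real number x regarded as a complex number). -/
open Real Set

noncomputable def zetaReal (x : ℝ) : ℝ :=
  2 * (2 * π) ^ (-(1 - x)) * Real.Gamma (1 - x) * Real.cos (π * (1 - x) / 2) *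
    ∑' n : ℕ, 1 / ((n : ℝ) + 1) ^ (1 - x)

lemma zeta_eq_zetaReal {x : ℝ} (hx : x < 0) :
    riemannZeta (x : ℂ) = (zetaReal x : ℂ) := by
  have hs1 : (1 : ℝ) < 1 - x := by linarith
  have hxc : (x : ℂ) = 1 - ((1 - x : ℝ) : ℂ) := by push_cast; ring
  have hn : ∀ n : ℕ, ((1 - x : ℝ) : ℂ) ≠ -(n : ℂ) := by
    intro n
    simp only [Ne, ← Complex.ofReal_natCast, ← Complex.ofReal_neg, Complex.ofReal_inj]
    have h0 : -(n : ℝ) ≤ 0 := neg_nonpos.mpr (Nat.cast_nonneg n)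
    intro h; rw [h] at hs1; linarith
  rw [hxc, riemannZeta_one_sub hn (by
      simp only [Ne, Complex.ofReal_eq_one]; linarith)]
  rw [zeta_eq_tsum_one_div_nat_add_one_cpow (by simpa using hs1)]
  have hb : (0:ℝ) ≤ 2 * π := by positivity
  have hnn : ∀ n : ℕ, (0:ℝ) ≤ (n : ℝ) + 1 := fun n => by positivity
  rw [zetaReal]
  simp only [Complex.ofReal_mul, Complex.ofReal_div, Complex.ofReal_one,
    Complex.ofReal_ofNat, Complex.ofReal_neg, Complex.ofReal_cos, Complex.ofReal_tsum,
    Complex.Gamma_ofReal, Complex.ofReal_cpow hb, Complex.ofReal_add,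
    Complex.ofReal_natCast, fun n => Complex.ofReal_cpow (hnn n)]

lemma zetaReal_value_lt : zetaReal (-33.9) < -33.9 := by
  have h349 : (1:ℝ) - (-33.9) = 34.9 := by norm_num
  rw [zetaReal, h349]
  have hπl : 3.14 ≤ π := by linarith [Real.pi_gt_d2]
  have hπu : π ≤ 3.15 := by linarith [Real.pi_lt_d2]
  have hb : (0:ℝ) < 2 * π := by positivity
  -- bound on the power factor
  have hA : ((6.3:ℝ)^(35:ℕ))⁻¹ ≤ (2*π) ^ (-(34.9:ℝ)) := by
    rw [Real.rpow_neg hb.le]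
    apply inv_anti₀ (by positivity)
    calc (2*π) ^ (34.9:ℝ) ≤ (6.3:ℝ) ^ (34.9:ℝ) :=
          Real.rpow_le_rpow hb.le (by linarith) (by norm_num)
      _ ≤ (6.3:ℝ) ^ ((35:ℕ):ℝ) :=
          Real.rpow_le_rpow_of_exponent_le (by norm_num) (by norm_num)
      _ = (6.3:ℝ) ^ (35:ℕ) := Real.rpow_natCast _ _
  -- bound on the Gamma factor
  have hG : ((Nat.factorial 33 : ℕ) : ℝ) ≤ Real.Gamma 34.9 := by
    have h34 : Real.Gamma 34 = Nat.factorial 33 := by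
      rw [show (34:ℝ) = ((33:ℕ):ℝ) + 1 by norm_num, Real.Gamma_nat_eq_factorial]
    have := Real.Gamma_strictMonoOn_Ici (by norm_num : (34:ℝ) ∈ Set.Ici 2)
      (by norm_num : (34.9:ℝ) ∈ Set.Ici 2) (by norm_num)
    rw [← h34]; exact this.le
  -- bound on the cosine factor
  have hC : Real.cos (π * 34.9 / 2) ≤ -(1/10) := by
    rw [show π * 34.9 / 2 = -(0.05*π + π/2) + (9:ℤ) * (2*π) by push_cast; ring,
      Real.cos_add_int_mul_two_pi, Real.cos_neg, Real.cos_add_pi_div_two]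
    have hx0 : (0:ℝ) < 0.05 * π := by positivity
    have hx1 : (0.05:ℝ) * π ≤ 1 := by nlinarith
    have hcube : (0.05*π)^3 ≤ (0.1575:ℝ)^3 :=
      pow_le_pow_left₀ (by positivity) (by linarith) 3
    have := Real.sin_gt_sub_cube hx0
    nlinarith [hcube]
  -- bound on the zeta factor
  have hsum : Summable (fun n : ℕ => 1/((n:ℝ)+1) ^ (34.9:ℝ)) := by
    have h1 := (Real.summable_one_div_nat_rpow (p := 34.9)).mpr (by norm_num)
    have h2 := (summable_nat_add_iff 1).mpr h1
    simpa using h2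
  have hZ : (1:ℝ) ≤ ∑' n : ℕ, 1/((n:ℝ)+1) ^ (34.9:ℝ) := by
    calc (1:ℝ) = 1/(((0:ℕ):ℝ)+1) ^ (34.9:ℝ) := by norm_num
      _ ≤ _ := Summable.le_tsum hsum 0 (fun i _ => by positivity)
  have hApos : (0:ℝ) < (2*π) ^ (-(34.9:ℝ)) := Real.rpow_pos_of_pos hb _
  have hGpos : (0:ℝ) < Real.Gamma 34.9 := lt_of_lt_of_le (by positivity) hG
  have hZpos : (0:ℝ) < ∑' n : ℕ, 1/((n:ℝ)+1) ^ (34.9:ℝ) := by linarith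
  set A := (2*π) ^ (-(34.9:ℝ))
  set G := Real.Gamma 34.9
  set Z := ∑' n : ℕ, 1/((n:ℝ)+1) ^ (34.9:ℝ)
  calc 2 * A * G * Real.cos (π * 34.9 / 2) * Z
      = (2*A*G*Z) * Real.cos (π * 34.9 / 2) := by ring
    _ ≤ (2*A*G*Z) * (-(1/10)) := mul_le_mul_of_nonneg_left hC (by positivity)
    _ = -((1/10) * (2*A*G*Z)) := by ring
    _ ≤ -((1/10) * (2 * ((6.3:ℝ)^(35:ℕ))⁻¹ * ((Nat.factorial 33 : ℕ) : ℝ) * 1)) := by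
        apply neg_le_neg
        gcongr
    _ < -33.9 := by norm_num [Nat.factorial]

/-- The Riemann zeta function has a real fixed point between `-34` and `-33.9`. -/
theorem zeta_fixed_point_near_neg_34 :
    ∃ x : ℝ, -34 < x ∧ x < -33.9 ∧ riemannZeta (x : ℂ) = (x : ℂ) := by
  have hz34 : riemannZeta ((-34:ℝ) : ℂ) = 0 := by
    rw [show ((-34:ℝ):ℂ) = -2 * ((16:ℕ) + 1) by push_cast; norm_num]
    exact riemannZeta_neg_two_mul_nat_add_one 16
  set f : ℝ → ℝ := fun x => (riemannZeta (x:ℂ)).re - x with hf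
  have hcont : ContinuousOn f (Set.Icc (-34 : ℝ) (-33.9)) := by
    intro x hx
    have hne : (x:ℂ) ≠ 1 := by
      simp only [Ne, Complex.ofReal_eq_one]
      have := hx.2; intro h; rw [h] at this; norm_num at this
    exact ((Complex.continuous_re.continuousAt.comp
      ((differentiableAt_riemannZeta hne).continuousAt.comp
        Complex.continuous_ofReal.continuousAt)).sub continuousAt_id).continuousWithinAt
  have hval34 : f (-34) = 34 := by
    show (riemannZeta ((-34:ℝ):ℂ)).re - (-34) = 34
    rw [hz34]; norm_num
  have hval339 : f (-33.9) < 0 := by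
    have h := zeta_eq_zetaReal (x := -33.9) (by norm_num)
    simp only [hf, h, Complex.ofReal_re]
    linarith [zetaReal_value_lt]
  have h0mem : (0:ℝ) ∈ Set.Ioo (f (-33.9)) (f (-34)) := ⟨hval339, by rw [hval34]; norm_num⟩
  obtain ⟨x, hxmem, hfx⟩ :=
    intermediate_value_Ioo' (by norm_num : (-34:ℝ) ≤ -33.9) hcont h0mem
  refine ⟨x, hxmem.1, hxmem.2, ?_⟩
  have hx0 : x < 0 := by have := hxmem.2; linarith
  have hre : (riemannZeta (x:ℂ)).re = x := by
    have : (riemannZeta (x:ℂ)).re - x = 0 := hfx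
    linarith
  have hzr : zetaReal x = x := by
    have h := congrArg Complex.re (zeta_eq_zetaReal hx0)
    rw [Complex.ofReal_re] at h
    rw [← h, hre]
  rw [zeta_eq_zetaReal hx0, hzr]
end
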